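/- Identify ℝ³ with ℂ × ℝ. Let (p_k)_{k∈B} be a set of distinct points in [0,1] (B ⊆ ℕ), let A_k ⊆ ℕ be pairwise disjoint sets, and let (b_n)_{n∈ℕ} be a decreasing sequence of positive reals converging to 0. Then the set E = ({0} × [0,1]) ∪ ⋃_{k∈B} ⋃_{n∈A_k} ({t e^{2πi/n} : t ∈ [0, b_n]} × {p_k}) is a closed subset of ℝ³. -/

import Mathlib

open Complex Filter

private lemma abs_exp_dir (n : ℕ) :
    ‖Complex.exp (2 * Real.pi * Complex.I / n)‖ = 1 := by
  have h : (2 * Real.pi * Complex.I / n) = ((2 * Real.pi / n : ℝ) : ℂ) * Complex.I := by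
    push_cast; ring
  rw [h, Complex.norm_exp_ofReal_mul_I]

/-- The segment `{0} × [0,1]` with whiskers of lengths `b_n → 0` in directions
`e^{2πi/n}` attached at distinct heights `p_k` is a closed subset of `ℂ × ℝ`. -/
theorem stmt12 (B : Set ℕ) (p : ℕ → ℝ) (hp : ∀ k ∈ B, p k ∈ Set.Icc (0:ℝ) 1)
    (hpinj : ∀ k ∈ B, ∀ j ∈ B, p k = p j → k = j)
    (A : ℕ → Set ℕ) (hA1 : ∀ k, ∀ n ∈ A k, 1 ≤ n)
    (hAdisj : ∀ k j, k ≠ j → A k ∩ A j = ∅)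
    (b : ℕ → ℝ) (hbpos : ∀ n, 0 < b n) (hbanti : Antitone b)
    (hb0 : Filter.Tendsto b Filter.atTop (nhds 0))
    (E : Set (ℂ × ℝ))
    (hE : E = ({0} ×ˢ Set.Icc (0:ℝ) 1) ∪
      ⋃ k ∈ B, ⋃ n ∈ A k,
        {q : ℂ × ℝ | ∃ t ∈ Set.Icc (0:ℝ) (b n),
          q = ((t : ℂ) * Complex.exp (2 * Real.pi * Complex.I / n), p k)}) :
    IsClosed E := by
  set C : Set (ℂ × ℝ) := ({0} ×ˢ Set.Icc (0:ℝ) 1) with hC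
  set U : Set (ℂ × ℝ) := ⋃ k ∈ B, ⋃ n ∈ A k,
      {q : ℂ × ℝ | ∃ t ∈ Set.Icc (0:ℝ) (b n),
        q = ((t : ℂ) * Complex.exp (2 * Real.pi * Complex.I / n), p k)} with hU
  have hCclosed : IsClosed C := isClosed_singleton.prod isClosed_Icc
  have hEclosedC : IsClosed E ↔ IsClosed (C ∪ U) := by rw [hE]
  apply IsSeqClosed.isClosed
  intro x q hmem hlim
  by_cases h1 : ∃ᶠ m in atTop, x m ∈ C
  · have : q ∈ closure C := mem_closure_of_frequently_of_tendsto h1 hlim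
    rw [hE]; left; rwa [hCclosed.closure_eq] at this
  · -- eventually in U
    have h2 : ∀ᶠ m in atTop, x m ∈ U := by
      rw [Filter.not_frequently] at h1
      filter_upwards [h1] with m hm
      have := hmem m
      rw [hE] at this
      rcases this with h | h
      · exact absurd h hm
      · exact h
    have hchoice : ∀ m, ∃ k n t, x m ∈ U →
        k ∈ B ∧ n ∈ A k ∧ t ∈ Set.Icc (0:ℝ) (b n) ∧
        x m = ((t : ℂ) * Complex.exp (2 * Real.pi * Complex.I / n), p k) := by
      intro m
      by_cases hm : x m ∈ U
      · simp only [hU, Set.mem_iUnion, Set.mem_setOf_eq] at hm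
        obtain ⟨k, hk, n, hn, t, ht, hx⟩ := hm
        exact ⟨k, n, t, fun _ => ⟨hk, hn, ht, hx⟩⟩
      · exact ⟨0, 0, 0, fun h => absurd h hm⟩
    choose k n t hprop using hchoice
    by_cases hn : Tendsto n atTop atTop
    · -- whisker lengths go to 0, limit is on the core
      have hev : ∀ᶠ m in atTop, ‖(x m).1‖ ≤ b (n m) := by
        filter_upwards [h2] with m hm
        obtain ⟨hkB, hnA, ht, hx⟩ := hprop m hm
        rw [hx]
        simp only [norm_mul, Complex.norm_real, Real.norm_eq_abs, abs_exp_dir, mul_one]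
        rw [_root_.abs_of_nonneg ht.1]
        exact ht.2
      have hfst0 : Tendsto (fun m => (x m).1) atTop (nhds 0) :=
        squeeze_zero_norm' hev (hb0.comp hn)
      have hfstq : Tendsto (fun m => (x m).1) atTop (nhds q.1) :=
        (continuous_fst.tendsto q).comp hlim
      have hq1 : q.1 = 0 := tendsto_nhds_unique hfstq hfst0
      have hq2 : q.2 ∈ Set.Icc (0:ℝ) 1 := by
        apply isClosed_Icc.mem_of_tendsto ((continuous_snd.tendsto q).comp hlim)
        filter_upwards [h2] with m hm
        obtain ⟨hkB, hnA, ht, hx⟩ := hprop m hm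
        show (x m).2 ∈ Set.Icc (0:ℝ) 1
        rw [hx]
        exact hp _ hkB
      rw [hE]; left
      exact ⟨hq1, hq2⟩
    · -- some whisker index occurs infinitely often
      rw [Filter.tendsto_atTop] at hn
      push_neg at hn
      obtain ⟨N, hN⟩ := hn
      replace hN : ∃ᶠ m in atTop, ¬ N ≤ n m := hN.mono fun m hm => not_le.mpr hm
      have hfr : ∃ᶠ m in atTop, n m < N ∧ x m ∈ U := by
        apply Frequently.and_eventually _ h2
        exact hN.mono fun m hm => not_le.mp hm
      have hSinf : {m | n m < N ∧ x m ∈ U}.Infinite :=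
        Nat.frequently_atTop_iff_infinite.mp hfr
      have hsub : {m | n m < N ∧ x m ∈ U} ⊆
          ⋃ j ∈ Finset.range N, {m | n m = j ∧ x m ∈ U} := by
        intro m hm
        simp only [Set.mem_iUnion, Set.mem_setOf_eq, Finset.mem_range]
        exact ⟨n m, hm.1, rfl, hm.2⟩
      have hex : ∃ j, {m | n m = j ∧ x m ∈ U}.Infinite := by
        by_contra hcon
        push_neg at hcon
        exact hSinf (Set.Finite.subset (Set.Finite.biUnion (Finset.range N).finite_toSet
          (fun j _ => hcon j)) hsub)
      obtain ⟨j, hjinf⟩ := hex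
      obtain ⟨m0, hm0⟩ := hjinf.nonempty
      obtain ⟨hk0B, hj0A, _, _⟩ := hprop m0 hm0.2
      rw [hm0.1] at hj0A
      set k0 := k m0 with hk0
      -- the whisker W is compact
      set f : ℝ → ℂ × ℝ := fun s =>
        ((s : ℂ) * Complex.exp (2 * Real.pi * Complex.I / j), p k0) with hf
      have hfc : Continuous f :=
        (Complex.continuous_ofReal.mul continuous_const).prodMk continuous_const
      set W : Set (ℂ × ℝ) := f '' Set.Icc 0 (b j) with hW
      have hWclosed : IsClosed W := (isCompact_Icc.image hfc).isClosed
      have hkconst : ∀ m ∈ {m | n m = j ∧ x m ∈ U}, k m = k0 := by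
        intro m hm
        obtain ⟨hkB, hjA, _, _⟩ := hprop m hm.2
        rw [hm.1] at hjA
        by_contra hne
        have := hAdisj (k m) k0 hne
        exact absurd (Set.mem_inter hjA hj0A) (by rw [this]; exact not_false)
      have hfrW : ∃ᶠ m in atTop, x m ∈ W := by
        apply (Nat.frequently_atTop_iff_infinite.mpr hjinf).mono
        intro m hm
        obtain ⟨hkB, hjA, ht, hx⟩ := hprop m hm.2
        refine ⟨t m, ?_, ?_⟩
        · rw [← hm.1]; exact ht
        · rw [hf]
          simp only
          rw [hx, hm.1, hkconst m hm]
      have hqW : q ∈ W := by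
        have := mem_closure_of_frequently_of_tendsto hfrW hlim
        rwa [hWclosed.closure_eq] at this
      obtain ⟨s, hs, hfs⟩ := hqW
      rw [hE]; right
      rw [hU]
      simp only [Set.mem_iUnion, Set.mem_setOf_eq]
      exact ⟨k0, hk0B, j, hj0A, s, hs, hfs.symm⟩
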